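/- Let A be a finite dimensional algebra over an algebraically closed field k, and W a finite dimensional k-central A-bimodule. For finitely generated projective A-modules P, an element w ∈ W(P) = Hom_A(P, W ⊗_A P), and any conflation w' → w ⊕ v → v in the bimodule category W-el (i.e. the underlying sequence of projective modules 0 → P → P ⊕ Q → Q → 0 is exact), one has dim Hom_W(w, z) ≤ dim Hom_W(w', z) and dim Hom_W(z, w) ≤ dim Hom_W(z, w') for every object z of W-el. -/
import Mathlib

set_option linter.unusedSectionVars false

noncomputable section

section WEl

variable (k A W : Type) [Field k] [Ring A] [Algebra k A]
  [AddCommGroup W] [Module k W] [Module A W] [Module Aᵐᵒᵖ W]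
  [SMulCommClass A Aᵐᵒᵖ W] [IsScalarTower k A W]

variable (P : Type) [AddCommGroup P] [Module k P] [Module A P] [IsScalarTower k A P]

/-- The defining relations of the tensor product `W ⊗_A P`. -/
def wrel : Submodule k (TensorProduct k W P) :=
  Submodule.span k {x | ∃ (a : A) (v : W) (p : P),
    x = (MulOpposite.op a • v) ⊗ₜ[k] p - v ⊗ₜ[k] (a • p)}

/-- The tensor product `W ⊗_A P` over the (noncommutative) algebra `A`. -/
abbrev WT := TensorProduct k W P ⧸ wrel k A W P

/-- The elementary tensor `v ⊗ p` of `W ⊗_A P`. -/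
def wmk (v : W) (p : P) : WT k A W P := Submodule.Quotient.mk (v ⊗ₜ[k] p)

/-- Left multiplication by `a : A` on `W`, as a `k`-linear map. -/
def smulW (a : A) : W →ₗ[k] W where
  toFun := (a • ·)
  map_add' := smul_add a
  map_smul' c v := by
    simp only [RingHom.id_apply]
    rw [← algebraMap_smul A c v, ← algebraMap_smul A c (a • v), smul_smul, smul_smul,
      Algebra.commutes]

/-- The left `A`-action on `W ⊗_A P` (through the left action on `W`). -/
def tau (a : A) : WT k A W P →ₗ[k] WT k A W P :=
  Submodule.mapQ _ _ (LinearMap.rTensor P (smulW k A W a)) (by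
    rw [wrel, Submodule.span_le]
    rintro x ⟨b, v, p, rfl⟩
    have : (LinearMap.rTensor P (smulW k A W a))
        ((MulOpposite.op b • v) ⊗ₜ[k] p - v ⊗ₜ[k] (b • p))
        = (MulOpposite.op b • (a • v)) ⊗ₜ[k] p - (a • v) ⊗ₜ[k] (b • p) := by
      simp [smulW, smul_comm]
    rw [SetLike.mem_coe, Submodule.mem_comap, this]
    exact Submodule.subset_span ⟨b, a • v, p, rfl⟩)

lemma ksmul_comm {M : Type} [AddCommGroup M] [Module k M] [Module A M]
    [IsScalarTower k A M] (c : k) (a : A) (x : M) : c • a • x = a • c • x := by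
  rw [← algebraMap_smul A c (a • x), ← algebraMap_smul A c x, smul_smul, smul_smul,
    Algebra.commutes]

variable {P}
variable {P' : Type} [AddCommGroup P'] [Module k P'] [Module A P'] [IsScalarTower k A P']

/-- The map `1_W ⊗ α : W ⊗_A P → W ⊗_A P'` induced by an `A`-linear map `α`. -/
def tmap (α : P →ₗ[k] P') (hα : ∀ (a : A) (p : P), α (a • p) = a • α p) :
    WT k A W P →ₗ[k] WT k A W P' :=
  Submodule.mapQ _ _ (LinearMap.lTensor W α) (by
    rw [wrel, Submodule.span_le]
    rintro x ⟨b, v, p, rfl⟩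
    have : (LinearMap.lTensor W α)
        ((MulOpposite.op b • v) ⊗ₜ[k] p - v ⊗ₜ[k] (b • p))
        = (MulOpposite.op b • v) ⊗ₜ[k] (α p) - v ⊗ₜ[k] (b • α p) := by
      simp [hα]
    rw [SetLike.mem_coe, Submodule.mem_comap, this]
    exact Submodule.subset_span ⟨b, v, α p, rfl⟩)

lemma tmap_mk (α : P →ₗ[k] P') (hα : ∀ (a : A) (p : P), α (a • p) = a • α p)
    (v : W) (p : P) : tmap k A W α hα (wmk k A W P v p) = wmk k A W P' v (α p) := by
  simp [tmap, wmk, Submodule.mapQ_apply]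

/-- The space of morphisms `(P, w) → (P', w')` in the bimodule category `W-el`:
`A`-linear maps `α : P → P'` with `(1 ⊗ α) ∘ w = w' ∘ α`. -/
def HomW (w : P →ₗ[k] WT k A W P) (w' : P' →ₗ[k] WT k A W P') :
    Submodule k (P →ₗ[k] P') where
  carrier := {α | ∃ h : ∀ (a : A) (p : P), α (a • p) = a • α p,
    (tmap k A W α h).comp w = w'.comp α}
  add_mem' := by
    rintro α β ⟨hα, cα⟩ ⟨hβ, cβ⟩
    refine ⟨fun a p => by simp [hα, hβ, smul_add], ?_⟩
    have he : ∀ h', tmap k A W (α + β) h' = tmap k A W α hα + tmap k A W β hβ := by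
      intro h'
      apply LinearMap.ext
      intro x
      obtain ⟨y, rfl⟩ := Submodule.Quotient.mk_surjective _ x
      simp [tmap, Submodule.mapQ_apply]
    rw [he]
    ext p
    have h1 := LinearMap.congr_fun cα p
    have h2 := LinearMap.congr_fun cβ p
    simp only [LinearMap.add_apply, LinearMap.comp_apply] at *
    rw [h1, h2, map_add]
  zero_mem' := by
    refine ⟨fun a p => by simp, ?_⟩
    have he : ∀ h', tmap k A W (0 : P →ₗ[k] P') h' = 0 := by
      intro h'
      apply LinearMap.ext
      intro x
      obtain ⟨y, rfl⟩ := Submodule.Quotient.mk_surjective _ x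
      simp [tmap, Submodule.mapQ_apply]
    rw [he]
    ext p; simp
  smul_mem' := by
    rintro c α ⟨hα, cα⟩
    refine ⟨fun a p => by simp only [LinearMap.smul_apply, hα]; rw [ksmul_comm k A], ?_⟩
    have he : ∀ h', tmap k A W (c • α) h' = c • tmap k A W α hα := by
      intro h'
      apply LinearMap.ext
      intro x
      obtain ⟨y, rfl⟩ := Submodule.Quotient.mk_surjective _ x
      simp [tmap, Submodule.mapQ_apply]
    rw [he]
    ext p
    have h1 := LinearMap.congr_fun cα p
    simp only [LinearMap.smul_apply, LinearMap.comp_apply] at *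
    rw [h1, map_smul]

/-- `w` is an element of the bimodule `W` over `P`, i.e. `w : P → W ⊗_A P` is `A`-linear. -/
def IsEl (w : P →ₗ[k] WT k A W P) : Prop :=
  ∀ (a : A) (p : P), w (a • p) = tau k A W P a (w p)

variable {Q : Type} [AddCommGroup Q] [Module k Q] [Module A Q] [IsScalarTower k A Q]

/-- The direct sum `w ⊕ v` of two elements, an element over `P × Q`. -/
def dsumEl (w : P →ₗ[k] WT k A W P) (v : Q →ₗ[k] WT k A W Q) :
    (P × Q) →ₗ[k] WT k A W (P × Q) :=
  (tmap k A W (LinearMap.inl k P Q) (fun a p => by ext <;> simp)).comp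
      (w.comp (LinearMap.fst k P Q))
    + (tmap k A W (LinearMap.inr k P Q) (fun a q => by ext <;> simp)).comp
      (v.comp (LinearMap.snd k P Q))

end WEl

section Aux

variable (k A W : Type) [Field k] [Ring A] [Algebra k A]
  [AddCommGroup W] [Module k W] [Module A W] [Module Aᵐᵒᵖ W]
  [SMulCommClass A Aᵐᵒᵖ W] [IsScalarTower k A W]

variable {P P' P'' : Type}
  [AddCommGroup P] [Module k P] [Module A P] [IsScalarTower k A P]
  [AddCommGroup P'] [Module k P'] [Module A P'] [IsScalarTower k A P']
  [AddCommGroup P''] [Module k P''] [Module A P''] [IsScalarTower k A P'']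

lemma tmap_comp (α : P →ₗ[k] P') (β : P' →ₗ[k] P'')
    (hα : ∀ (a : A) (p : P), α (a • p) = a • α p)
    (hβ : ∀ (a : A) (p : P'), β (a • p) = a • β p)
    (h : ∀ (a : A) (p : P), (β.comp α) (a • p) = a • (β.comp α) p) :
    tmap k A W (β.comp α) h = (tmap k A W β hβ).comp (tmap k A W α hα) := by
  apply LinearMap.ext; intro x
  obtain ⟨y, rfl⟩ := Submodule.Quotient.mk_surjective _ x
  simp [tmap, Submodule.mapQ_apply, LinearMap.lTensor_comp]

lemma tmap_congr {α β : P →ₗ[k] P'}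
    (hα : ∀ (a : A) (p : P), α (a • p) = a • α p)
    (hβ : ∀ (a : A) (p : P), β (a • p) = a • β p)
    (e : α = β) : tmap k A W α hα = tmap k A W β hβ := by subst e; rfl

lemma tmap_id (h : ∀ (a : A) (p : P), (LinearMap.id : P →ₗ[k] P) (a • p)
      = a • (LinearMap.id : P →ₗ[k] P) p) :
    tmap k A W (LinearMap.id : P →ₗ[k] P) h = LinearMap.id := by
  apply LinearMap.ext; intro x
  obtain ⟨y, rfl⟩ := Submodule.Quotient.mk_surjective _ x
  simp [tmap, Submodule.mapQ_apply]

lemma tmap_zero (h : ∀ (a : A) (p : P), (0 : P →ₗ[k] P') (a • p)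
      = a • (0 : P →ₗ[k] P') p) :
    tmap k A W (0 : P →ₗ[k] P') h = 0 := by
  apply LinearMap.ext; intro x
  obtain ⟨y, rfl⟩ := Submodule.Quotient.mk_surjective _ x
  simp [tmap, Submodule.mapQ_apply]

lemma homW_comp {w₁ : P →ₗ[k] WT k A W P} {w₂ : P' →ₗ[k] WT k A W P'}
    {w₃ : P'' →ₗ[k] WT k A W P''} {α : P →ₗ[k] P'} {β : P' →ₗ[k] P''}
    (hα : α ∈ HomW k A W w₁ w₂) (hβ : β ∈ HomW k A W w₂ w₃) :
    β.comp α ∈ HomW k A W w₁ w₃ := by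
  obtain ⟨ha, ca⟩ := hα
  obtain ⟨hb, cb⟩ := hβ
  have h : ∀ (a : A) (p : P), (β.comp α) (a • p) = a • (β.comp α) p := by
    intro a p; simp only [LinearMap.comp_apply, ha, hb]
  refine ⟨h, ?_⟩
  rw [tmap_comp k A W α β ha hb h, LinearMap.comp_assoc, ca, ← LinearMap.comp_assoc, cb,
    LinearMap.comp_assoc]

lemma mem_inl (w : P →ₗ[k] WT k A W P) (v : P' →ₗ[k] WT k A W P') :
    LinearMap.inl k P P' ∈ HomW k A W w (dsumEl k A W w v) := by
  refine ⟨fun a p => by ext <;> simp, ?_⟩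
  apply LinearMap.ext; intro p
  simp [dsumEl]

lemma mem_inr (w : P →ₗ[k] WT k A W P) (v : P' →ₗ[k] WT k A W P') :
    LinearMap.inr k P P' ∈ HomW k A W v (dsumEl k A W w v) := by
  refine ⟨fun a p => by ext <;> simp, ?_⟩
  apply LinearMap.ext; intro p
  simp [dsumEl]

lemma mem_fst (w : P →ₗ[k] WT k A W P) (v : P' →ₗ[k] WT k A W P') :
    LinearMap.fst k P P' ∈ HomW k A W (dsumEl k A W w v) w := by
  refine ⟨fun a p => rfl, ?_⟩
  have h1 : (tmap k A W (LinearMap.fst k P P') (fun a p => rfl)).comp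
      (tmap k A W (LinearMap.inl k P P') (fun a p => by ext <;> simp)) = LinearMap.id := by
    rw [← tmap_comp k A W (LinearMap.inl k P P') (LinearMap.fst k P P')
      (fun a p => by ext <;> simp) (fun a p => rfl) (fun a p => rfl),
      tmap_congr k A W (fun a p => rfl)
      (fun a p => rfl) (show (LinearMap.fst k P P').comp (LinearMap.inl k P P')
        = LinearMap.id from rfl), tmap_id]
  have h2 : (tmap k A W (LinearMap.fst k P P') (fun a p => rfl)).comp
      (tmap k A W (LinearMap.inr k P P') (fun a p => by ext <;> simp)) = 0 := by
    rw [← tmap_comp k A W (LinearMap.inr k P P') (LinearMap.fst k P P')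
      (fun a p => by ext <;> simp) (fun a p => rfl) (fun a p => by simp),
      tmap_congr k A W (fun a p => by simp)
      (fun a p => by simp) (show (LinearMap.fst k P P').comp (LinearMap.inr k P P')
        = 0 from rfl), tmap_zero]
  apply LinearMap.ext; intro x
  have e1 := LinearMap.congr_fun h1 (w x.1)
  have e2 := LinearMap.congr_fun h2 (v x.2)
  simp only [LinearMap.comp_apply, LinearMap.id_apply, LinearMap.zero_apply] at e1 e2
  simp [dsumEl, e1, e2]

lemma mem_snd (w : P →ₗ[k] WT k A W P) (v : P' →ₗ[k] WT k A W P') :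
    LinearMap.snd k P P' ∈ HomW k A W (dsumEl k A W w v) v := by
  refine ⟨fun a p => rfl, ?_⟩
  have h1 : (tmap k A W (LinearMap.snd k P P') (fun a p => rfl)).comp
      (tmap k A W (LinearMap.inr k P P') (fun a p => by ext <;> simp)) = LinearMap.id := by
    rw [← tmap_comp k A W (LinearMap.inr k P P') (LinearMap.snd k P P')
      (fun a p => by ext <;> simp) (fun a p => rfl) (fun a p => rfl),
      tmap_congr k A W (fun a p => rfl)
      (fun a p => rfl) (show (LinearMap.snd k P P').comp (LinearMap.inr k P P')
        = LinearMap.id from rfl), tmap_id]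
  have h2 : (tmap k A W (LinearMap.snd k P P') (fun a p => rfl)).comp
      (tmap k A W (LinearMap.inl k P P') (fun a p => by ext <;> simp)) = 0 := by
    rw [← tmap_comp k A W (LinearMap.inl k P P') (LinearMap.snd k P P')
      (fun a p => by ext <;> simp) (fun a p => rfl) (fun a p => by simp),
      tmap_congr k A W (fun a p => by simp)
      (fun a p => by simp) (show (LinearMap.snd k P P').comp (LinearMap.inl k P P')
        = 0 from rfl), tmap_zero]
  apply LinearMap.ext; intro x
  have e1 := LinearMap.congr_fun h1 (v x.2)
  have e2 := LinearMap.congr_fun h2 (w x.1)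
  simp only [LinearMap.comp_apply, LinearMap.id_apply, LinearMap.zero_apply] at e1 e2
  simp [dsumEl, e1, e2]

end Aux


lemma rank_aux (k : Type) [Field k] (M N O R : Type)
    [AddCommGroup M] [Module k M] [AddCommGroup N] [Module k N]
    [AddCommGroup O] [Module k O] [AddCommGroup R] [Module k R]
    [FiniteDimensional k M] [FiniteDimensional k N] [FiniteDimensional k O]
    [FiniteDimensional k R]
    (Phi : M →ₗ[k] N) (K : ↥(LinearMap.ker Phi) →ₗ[k] O) (J : (R × O) →ₗ[k] M)
    (hK : Function.Injective K) (hJ : Function.Injective J) :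
    Module.finrank k R ≤ Module.finrank k N := by
  have c1 : Module.finrank k (R × O) = Module.finrank k R + Module.finrank k O :=
    Module.finrank_prod
  have c2 := LinearMap.finrank_le_finrank_of_injective hJ
  have c3 := LinearMap.finrank_range_add_finrank_ker Phi
  have c4 := LinearMap.finrank_le_finrank_of_injective hK
  have c5 := Submodule.finrank_le (LinearMap.range Phi)
  omega

lemma rank_aux2 (k : Type) [Field k] (M N O R : Type)
    [AddCommGroup M] [Module k M] [AddCommGroup N] [Module k N]
    [AddCommGroup O] [Module k O] [AddCommGroup R] [Module k R]
    [FiniteDimensional k M] [FiniteDimensional k N] [FiniteDimensional k O]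
    [FiniteDimensional k R]
    (Phi : M →ₗ[k] O) (K : ↥(LinearMap.ker Phi) →ₗ[k] N) (J : (R × O) →ₗ[k] M)
    (hK : Function.Injective K) (hJ : Function.Injective J) :
    Module.finrank k R ≤ Module.finrank k N := by
  have c1 : Module.finrank k (R × O) = Module.finrank k R + Module.finrank k O :=
    Module.finrank_prod
  have c2 := LinearMap.finrank_le_finrank_of_injective hJ
  have c3 := LinearMap.finrank_range_add_finrank_ker Phi
  have c4 := LinearMap.finrank_le_finrank_of_injective hK
  have c5 := Submodule.finrank_le (LinearMap.range Phi)
  omega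

set_option maxHeartbeats 1600000
set_option synthInstance.maxHeartbeats 1000000

/-- in the bimodule category `W-el` of a finite dimensional `k`-central
bimodule `W` over a finite dimensional algebra `A` (`k` algebraically closed), a conflation
`w' → w ⊕ v → v` (underlying exact sequence `0 → P' → P ⊕ Q → Q → 0` of finitely generated
projective modules) forces `dim Hom_W(w, z) ≤ dim Hom_W(w', z)` and
`dim Hom_W(z, w) ≤ dim Hom_W(z, w')` for every object `z` of `W-el`. -/
theorem stmt4
    (k A W : Type) [Field k] [IsAlgClosed k] [Ring A] [Algebra k A] [FiniteDimensional k A]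
    [AddCommGroup W] [Module k W] [Module A W] [Module Aᵐᵒᵖ W]
    [SMulCommClass A Aᵐᵒᵖ W] [IsScalarTower k A W] [FiniteDimensional k W]
    (hcentral : ∀ (c : k) (x : W), MulOpposite.op (algebraMap k A c) • x = c • x)
    (P P' Q : Type)
    [AddCommGroup P] [Module k P] [Module A P] [IsScalarTower k A P]
    [AddCommGroup P'] [Module k P'] [Module A P'] [IsScalarTower k A P']
    [AddCommGroup Q] [Module k Q] [Module A Q] [IsScalarTower k A Q]
    (hPfg : Module.Finite A P) (hPproj : Module.Projective A P)
    (hP'fg : Module.Finite A P') (hP'proj : Module.Projective A P')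
    (hQfg : Module.Finite A Q) (hQproj : Module.Projective A Q)
    (w : P →ₗ[k] WT k A W P) (hw : IsEl k A W w)
    (w' : P' →ₗ[k] WT k A W P') (hw' : IsEl k A W w')
    (v : Q →ₗ[k] WT k A W Q) (hv : IsEl k A W v)
    (α : P' →ₗ[k] P × Q) (hα : α ∈ HomW k A W w' (dsumEl k A W w v))
    (β : (P × Q) →ₗ[k] Q) (hβ : β ∈ HomW k A W (dsumEl k A W w v) v)
    (hainj : Function.Injective α) (hbsurj : Function.Surjective β)
    (hexact : LinearMap.range α = LinearMap.ker β) :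
    ∀ (Z : Type) [AddCommGroup Z] [Module k Z] [Module A Z] [IsScalarTower k A Z],
      Module.Finite A Z → Module.Projective A Z →
      ∀ (z : Z →ₗ[k] WT k A W Z), IsEl k A W z →
        Module.finrank k (HomW k A W w z) ≤ Module.finrank k (HomW k A W w' z) ∧
        Module.finrank k (HomW k A W z w) ≤ Module.finrank k (HomW k A W z w') := by
  intro Z _ _ _ _ hZfg hZproj z hz
  classical
  haveI := hPfg; haveI := hP'fg; haveI := hQfg; haveI := hZfg
  haveI : Module.Finite k P := Module.Finite.trans A P
  haveI : Module.Finite k P' := Module.Finite.trans A P'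
  haveI : Module.Finite k Q := Module.Finite.trans A Q
  haveI : Module.Finite k Z := Module.Finite.trans A Z
  obtain ⟨hαh, hαc⟩ := hα
  obtain ⟨hβh, hβc⟩ := hβ
  -- A-linear versions of α and β
  let αA : P' →ₗ[A] P × Q :=
    { toFun := α, map_add' := fun x y => map_add α x y, map_smul' := hαh }
  let βA : (P × Q) →ₗ[A] Q :=
    { toFun := β, map_add' := fun x y => map_add β x y, map_smul' := hβh }
  -- an A-linear section of β
  obtain ⟨σA, hσ⟩ := Module.projective_lifting_property βA LinearMap.id hbsurj
  let σ : Q →ₗ[k] (P × Q) := LinearMap.restrictScalars k σA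
  have hσh : ∀ (a : A) (q : Q), σ (a • q) = a • σ q := fun a q => map_smul σA a q
  have hβσ : ∀ q, β (σ q) = q := fun q => LinearMap.congr_fun hσ q
  have hβα : ∀ p', β (α p') = 0 := fun p' => by
    have h1 : α p' ∈ LinearMap.range α := LinearMap.mem_range_self α p'
    rw [hexact, LinearMap.mem_ker] at h1; exact h1
  have hkr : ∀ x : P × Q, β x = 0 → ∃ p', α p' = x := fun x hx => by
    have h1 : x ∈ LinearMap.ker β := LinearMap.mem_ker.mpr hx
    rw [← hexact] at h1; exact h1
  have hmem : ∀ x : P × Q, x - σA (β x) ∈ LinearMap.range αA := by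
    intro x
    obtain ⟨p', hp'⟩ := hkr (x - σA (β x)) (by
      rw [map_sub, show β (σA (β x)) = β x from hβσ (β x), sub_self])
    exact ⟨p', hp'⟩
  -- an A-linear retraction of α
  let e : P' ≃ₗ[A] LinearMap.range αA :=
    LinearEquiv.ofInjective αA (show Function.Injective αA from hainj)
  let ρA : (P × Q) →ₗ[A] P' := e.symm.toLinearMap ∘ₗ
    LinearMap.codRestrict (LinearMap.range αA) (LinearMap.id - σA ∘ₗ βA) (fun c => hmem c)
  let ρ : (P × Q) →ₗ[k] P' := LinearMap.restrictScalars k ρA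
  have hρh : ∀ (a : A) (x : P × Q), ρ (a • x) = a • ρ x := fun a x => map_smul ρA a x
  have hαρ : ∀ x : P × Q, α (ρ x) = x - σ (β x) := by
    intro x
    have h1 := congrArg (Subtype.val)
      (LinearEquiv.apply_symm_apply e ⟨x - σA (β x), hmem x⟩)
    rw [LinearEquiv.ofInjective_apply] at h1
    exact h1
  have hρα : ∀ p', ρ (α p') = p' := fun p' =>
    hainj (by rw [hαρ, show β (α p') = 0 from hβα p', map_zero, sub_zero])
  have hαρ0 : ∀ x : P × Q, β x = 0 → α (ρ x) = x := fun x hx => by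
    rw [hαρ, hx, map_zero, sub_zero]
  -- injectivity of tmap α
  have hραh : ∀ (a : A) (p : P'), (ρ ∘ₗ α) (a • p) = a • (ρ ∘ₗ α) p := fun a p => by
    rw [LinearMap.comp_apply, hαh, LinearMap.comp_apply]; exact hρh a (α p)
  have hρα1 : (ρ ∘ₗ α : P' →ₗ[k] P') = LinearMap.id := LinearMap.ext fun p' => hρα p'
  have htα : (tmap k A W ρ hρh).comp (tmap k A W α hαh) = LinearMap.id := by
    rw [← tmap_comp k A W α ρ hαh hρh hραh,
      tmap_congr k A W hραh (fun a p => rfl) hρα1, tmap_id]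
  have tinj : Function.Injective (tmap k A W α hαh) :=
    Function.LeftInverse.injective (g := tmap k A W ρ hρh)
      (fun x => LinearMap.congr_fun htα x)
  constructor
  · -- dim Hom(w, z) ≤ dim Hom(w', z)
    let Φ : ↥(HomW k A W (dsumEl k A W w v) z) →ₗ[k] ↥(HomW k A W w' z) :=
      { toFun := fun μ => ⟨μ.1 ∘ₗ α, homW_comp k A W ⟨hαh, hαc⟩ μ.2⟩,
        map_add' := fun μ ν => Subtype.ext
          (by simp only [Submodule.coe_add, LinearMap.add_comp]),
        map_smul' := fun c μ => Subtype.ext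
          (by simp only [SetLike.val_smul, LinearMap.smul_comp, RingHom.id_apply]) }
    have hfac0 : ∀ (μ : (P × Q) →ₗ[k] Z), μ ∘ₗ α = 0 → ∀ x, μ (σ (β x)) = μ x := by
      intro μ hμ0 x
      obtain ⟨p', hp'⟩ := hkr (x - σ (β x)) (by
        rw [map_sub, show β (σ (β x)) = β x from hβσ (β x), sub_self])
      have h1 : μ (x - σ (β x)) = 0 := by
        rw [← hp']; exact LinearMap.congr_fun hμ0 p'
      rw [map_sub, sub_eq_zero] at h1
      exact h1.symm
    have hfac : ∀ (μ : (P × Q) →ₗ[k] Z), μ ∈ HomW k A W (dsumEl k A W w v) z →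
        μ ∘ₗ α = 0 → μ ∘ₗ σ ∈ HomW k A W v z := by
      intro μ hμ hμ0
      obtain ⟨hμh, hμc⟩ := hμ
      have hσβ := hfac0 μ hμ0
      have hsemi : ∀ (a : A) (q : Q), (μ ∘ₗ σ) (a • q) = a • (μ ∘ₗ σ) q := by
        intro a q
        simp only [LinearMap.comp_apply]
        rw [hσh, hμh]
      refine ⟨hsemi, ?_⟩
      have hcomb : ∀ (a : A) (x : P × Q), ((μ ∘ₗ σ) ∘ₗ β) (a • x)
          = a • ((μ ∘ₗ σ) ∘ₗ β) x := by
        intro a x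
        simp only [LinearMap.comp_apply]
        rw [hβh, hσh, hμh]
      have he : ((μ ∘ₗ σ) ∘ₗ β : (P × Q) →ₗ[k] Z) = μ := LinearMap.ext fun x => hσβ x
      apply LinearMap.ext; intro q
      obtain ⟨x, rfl⟩ := hbsurj q
      have e1 := LinearMap.congr_fun hβc x
      simp only [LinearMap.comp_apply] at e1 ⊢
      rw [← e1]
      have e2 := LinearMap.congr_fun (tmap_comp k A W β (μ ∘ₗ σ) hβh hsemi hcomb)
        ((dsumEl k A W w v) x)
      simp only [LinearMap.comp_apply] at e2
      rw [← e2, tmap_congr k A W hcomb hμh he]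
      have e3 := LinearMap.congr_fun hμc x
      simp only [LinearMap.comp_apply] at e3
      rw [e3, hσβ x]
    let K : ↥(LinearMap.ker Φ) →ₗ[k] ↥(HomW k A W v z) :=
      { toFun := fun μ => ⟨μ.1.1 ∘ₗ σ, hfac μ.1.1 μ.1.2
          (congrArg Subtype.val (LinearMap.mem_ker.mp μ.2))⟩,
        map_add' := fun μ ν => Subtype.ext
          (by simp only [Submodule.coe_add, LinearMap.add_comp]),
        map_smul' := fun c μ => Subtype.ext
          (by simp only [SetLike.val_smul, LinearMap.smul_comp, RingHom.id_apply]) }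
    have hKinj : Function.Injective K := by
      intro μ ν hμν
      have h1 : μ.1.1 ∘ₗ σ = ν.1.1 ∘ₗ σ := congrArg Subtype.val hμν
      apply Subtype.ext; apply Subtype.ext
      apply LinearMap.ext; intro x
      have e1 : μ.1.1 (σ (β x)) = ν.1.1 (σ (β x)) := LinearMap.congr_fun h1 (β x)
      have e2 := hfac0 μ.1.1 (congrArg Subtype.val (LinearMap.mem_ker.mp μ.2)) x
      have e3 := hfac0 ν.1.1 (congrArg Subtype.val (LinearMap.mem_ker.mp ν.2)) x
      rw [← e2, ← e3]; exact e1
    let J : (↥(HomW k A W w z) × ↥(HomW k A W v z)) →ₗ[k]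
        ↥(HomW k A W (dsumEl k A W w v) z) :=
      { toFun := fun φ => ⟨φ.1.1 ∘ₗ LinearMap.fst k P Q + φ.2.1 ∘ₗ LinearMap.snd k P Q,
          add_mem (homW_comp k A W (mem_fst k A W w v) φ.1.2)
            (homW_comp k A W (mem_snd k A W w v) φ.2.2)⟩,
        map_add' := fun x y => Subtype.ext (by
          simp only [Prod.fst_add, Prod.snd_add, Submodule.coe_add, LinearMap.add_comp]
          abel),
        map_smul' := fun c x => Subtype.ext (by
          simp only [Prod.smul_fst, Prod.smul_snd, SetLike.val_smul, LinearMap.smul_comp,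
            RingHom.id_apply, smul_add]) }
    have hJinj : Function.Injective J := by
      intro x y hxy
      have h1 := congrArg Subtype.val hxy
      have h2 : ∀ p : P, x.1.1 p = y.1.1 p := by
        intro p
        have h0 : x.1.1 p + x.2.1 0 = y.1.1 p + y.2.1 0 := LinearMap.congr_fun h1 (p, 0)
        simpa using h0
      have h3 : ∀ q : Q, x.2.1 q = y.2.1 q := by
        intro q
        have h0 : x.1.1 0 + x.2.1 q = y.1.1 0 + y.2.1 q := LinearMap.congr_fun h1 (0, q)
        simpa using h0
      exact Prod.ext (Subtype.ext (LinearMap.ext h2)) (Subtype.ext (LinearMap.ext h3))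
    clear_value Φ K J ρ σ e ρA αA βA
    clear hfac hfac0 tinj htα hρα1 hραh hαρ0 hρα hαρ hρh hσh hβσ hβα hkr hmem hσ hαc hβc
      hαh hβh hcentral hw hw' hv hz hainj hbsurj hexact
    clear ρ σ e ρA αA βA σA α β
    exact rank_aux k _ _ _ _ Φ K J hKinj hJinj
  · -- dim Hom(z, w) ≤ dim Hom(z, w')
    let Φ : ↥(HomW k A W z (dsumEl k A W w v)) →ₗ[k] ↥(HomW k A W z v) :=
      { toFun := fun μ => ⟨β ∘ₗ μ.1, homW_comp k A W μ.2 ⟨hβh, hβc⟩⟩,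
        map_add' := fun μ ν => Subtype.ext
          (by simp only [Submodule.coe_add, LinearMap.comp_add]),
        map_smul' := fun c μ => Subtype.ext
          (by simp only [SetLike.val_smul, LinearMap.comp_smul, RingHom.id_apply]) }
    have hfac : ∀ (μ : Z →ₗ[k] (P × Q)), μ ∈ HomW k A W z (dsumEl k A W w v) →
        β ∘ₗ μ = 0 → ρ ∘ₗ μ ∈ HomW k A W z w' := by
      intro μ hμ hμ0
      obtain ⟨hμh, hμc⟩ := hμ
      have hβμ : ∀ t, β (μ t) = 0 := fun t => LinearMap.congr_fun hμ0 t
      have hsemi : ∀ (a : A) (t : Z), (ρ ∘ₗ μ) (a • t) = a • (ρ ∘ₗ μ) t := by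
        intro a t; simp only [LinearMap.comp_apply]; rw [hμh, hρh]
      refine ⟨hsemi, ?_⟩
      have hcomb : ∀ (a : A) (t : Z), (α ∘ₗ (ρ ∘ₗ μ)) (a • t)
          = a • (α ∘ₗ (ρ ∘ₗ μ)) t := by
        intro a t; simp only [LinearMap.comp_apply]; rw [hμh, hρh, hαh]
      have he : (α ∘ₗ (ρ ∘ₗ μ) : Z →ₗ[k] P × Q) = μ :=
        LinearMap.ext fun t => hαρ0 (μ t) (hβμ t)
      apply LinearMap.ext; intro t
      apply tinj
      simp only [LinearMap.comp_apply]
      have r1 := LinearMap.congr_fun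
        (tmap_comp k A W (ρ ∘ₗ μ) α hsemi hαh hcomb) (z t)
      simp only [LinearMap.comp_apply] at r1
      rw [← r1, tmap_congr k A W hcomb hμh he]
      have r2 := LinearMap.congr_fun hμc t
      simp only [LinearMap.comp_apply] at r2
      have r3 := LinearMap.congr_fun hαc (ρ (μ t))
      simp only [LinearMap.comp_apply] at r3
      rw [r2, r3, hαρ0 (μ t) (hβμ t)]
    let K : ↥(LinearMap.ker Φ) →ₗ[k] ↥(HomW k A W z w') :=
      { toFun := fun μ => ⟨ρ ∘ₗ μ.1.1, hfac μ.1.1 μ.1.2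
          (congrArg Subtype.val (LinearMap.mem_ker.mp μ.2))⟩,
        map_add' := fun μ ν => Subtype.ext
          (by simp only [Submodule.coe_add, LinearMap.comp_add]),
        map_smul' := fun c μ => Subtype.ext
          (by simp only [SetLike.val_smul, LinearMap.comp_smul, RingHom.id_apply]) }
    have hKinj : Function.Injective K := by
      intro μ ν hμν
      have h1 : ρ ∘ₗ μ.1.1 = ρ ∘ₗ ν.1.1 := congrArg Subtype.val hμν
      have hβμ : ∀ t, β (μ.1.1 t) = 0 := fun t =>
        LinearMap.congr_fun (congrArg Subtype.val (LinearMap.mem_ker.mp μ.2)) t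
      have hβν : ∀ t, β (ν.1.1 t) = 0 := fun t =>
        LinearMap.congr_fun (congrArg Subtype.val (LinearMap.mem_ker.mp ν.2)) t
      apply Subtype.ext; apply Subtype.ext
      apply LinearMap.ext; intro t
      have e1 : ρ (μ.1.1 t) = ρ (ν.1.1 t) := LinearMap.congr_fun h1 t
      have e2 := hαρ0 (μ.1.1 t) (hβμ t)
      have e3 := hαρ0 (ν.1.1 t) (hβν t)
      rw [← e2, ← e3, e1]
    let J : (↥(HomW k A W z w) × ↥(HomW k A W z v)) →ₗ[k]
        ↥(HomW k A W z (dsumEl k A W w v)) :=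
      { toFun := fun φ => ⟨LinearMap.inl k P Q ∘ₗ φ.1.1 + LinearMap.inr k P Q ∘ₗ φ.2.1,
          add_mem (homW_comp k A W φ.1.2 (mem_inl k A W w v))
            (homW_comp k A W φ.2.2 (mem_inr k A W w v))⟩,
        map_add' := fun x y => Subtype.ext (by
          simp only [Prod.fst_add, Prod.snd_add, Submodule.coe_add, LinearMap.comp_add]
          abel),
        map_smul' := fun c x => Subtype.ext (by
          simp only [Prod.smul_fst, Prod.smul_snd, SetLike.val_smul, LinearMap.comp_smul,
            RingHom.id_apply, smul_add]) }
    have hJinj : Function.Injective J := by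
      intro x y hxy
      have h1 := congrArg Subtype.val hxy
      have h2 : ∀ t : Z, x.1.1 t = y.1.1 t := by
        intro t
        have h0 : (x.1.1 t, (0 : Q)) + ((0 : P), x.2.1 t)
            = (y.1.1 t, (0 : Q)) + ((0 : P), y.2.1 t) := LinearMap.congr_fun h1 t
        have := congrArg Prod.fst h0
        simpa using this
      have h3 : ∀ t : Z, x.2.1 t = y.2.1 t := by
        intro t
        have h0 : (x.1.1 t, (0 : Q)) + ((0 : P), x.2.1 t)
            = (y.1.1 t, (0 : Q)) + ((0 : P), y.2.1 t) := LinearMap.congr_fun h1 t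
        have := congrArg Prod.snd h0
        simpa using this
      exact Prod.ext (Subtype.ext (LinearMap.ext h2)) (Subtype.ext (LinearMap.ext h3))
    clear_value Φ K J ρ σ e ρA αA βA
    clear hfac tinj htα hρα1 hραh hαρ0 hρα hαρ hρh hσh hβσ hβα hkr hmem hσ hαc hβc
      hαh hβh hcentral hw hw' hv hz hainj hbsurj hexact
    clear ρ σ e ρA αA βA σA α β
    exact rank_aux2 k (↥(HomW k A W z (dsumEl k A W w v))) (↥(HomW k A W z w'))
      (↥(HomW k A W z v)) (↥(HomW k A W z w)) Φ K J hKinj hJinj
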